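/- For the exponential Bregman score S_a(x,y) = a^{-2}(exp(ay) − exp(ax)) − a^{-1}exp(ax)(y−x) with a ≠ 0, the mixing measure in the mixture representation over elementary scores S^E_{1/2,θ} (scaled so that S^E corresponds to α = 1/2 with the factor 2) has Lebesgue density h(θ) = exp(aθ): that is, for all x, y ∈ ℝ, S_a(x,y) = ∫_ℝ ((y−θ)₊ − (x−θ)₊ − (y−x)1(θ<x))·exp(aθ) dθ. -/

import Mathlib

open MeasureTheory

private lemma ftc_aux (a : ℝ) (ha : a ≠ 0) (c u v : ℝ) :
    ∫ θ in u..v, (c - θ) * Real.exp (a * θ)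
      = (((c - v)/a + 1/a^2) * Real.exp (a * v)) - (((c - u)/a + 1/a^2) * Real.exp (a * u)) := by
  apply intervalIntegral.integral_eq_sub_of_hasDerivAt
  · intro t _
    have h1 : HasDerivAt (fun t : ℝ => (c - t)/a + 1/a^2) (-1/a) t := by
      have h := (((hasDerivAt_id t).const_sub c).div_const a).add_const (1/a^2)
      exact h
    have h2 : HasDerivAt (fun t : ℝ => Real.exp (a * t)) (Real.exp (a * t) * a) t := by
      have := ((hasDerivAt_id t).const_mul a).exp
      simpa using this
    have := h1.mul h2
    convert this using 1
    · rfl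
    · rfl
    field_simp
    ring
  · apply Continuous.intervalIntegrable
    continuity

/-- The exponential Bregman score `S_a` has mixing density `h(θ) = exp(aθ)` over the
elementary scores `E_θ(x,y) = (y−θ)₊ − (x−θ)₊ − (y−x)·1(θ<x)`. -/
theorem stmt5 (a : ℝ) (ha : a ≠ 0) (x y : ℝ) :
    a⁻¹ ^ 2 * (Real.exp (a * y) - Real.exp (a * x)) - a⁻¹ * Real.exp (a * x) * (y - x)
      = ∫ θ : ℝ,
          (max (y - θ) 0 - max (x - θ) 0 - (y - x) * (if θ < x then (1:ℝ) else 0)) *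
            Real.exp (a * θ) := by
  rcases le_or_gt x y with hxy | hxy
  · have hfun : (fun θ : ℝ =>
        (max (y - θ) 0 - max (x - θ) 0 - (y - x) * (if θ < x then (1:ℝ) else 0)) *
          Real.exp (a * θ))
        = Set.indicator (Set.Ico x y) (fun θ => (y - θ) * Real.exp (a * θ)) := by
      funext θ
      simp only [Set.indicator, Set.mem_Ico]
      rcases lt_or_ge θ x with h1 | h1
      · have hy : θ < y := lt_of_lt_of_le h1 hxy
        rw [max_eq_left (by linarith), max_eq_left (by linarith), if_pos h1,
          if_neg (fun h => absurd h.1 (not_le.mpr h1))]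
        ring
      · rcases lt_or_ge θ y with h2 | h2
        · rw [max_eq_left (by linarith), max_eq_right (by linarith),
            if_neg (not_lt.mpr h1), if_pos ⟨h1, h2⟩]
          ring
        · rw [max_eq_right (by linarith), max_eq_right (by linarith),
            if_neg (not_lt.mpr h1), if_neg (fun h => absurd h.2 (not_lt.mpr h2))]
          ring
    rw [hfun, integral_indicator measurableSet_Ico, setIntegral_congr_set MeasureTheory.Ico_ae_eq_Ioc,
      ← intervalIntegral.integral_of_le hxy, ftc_aux a ha]
    field_simp
    ring
  · have hfun : (fun θ : ℝ =>
        (max (y - θ) 0 - max (x - θ) 0 - (y - x) * (if θ < x then (1:ℝ) else 0)) *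
          Real.exp (a * θ))
        = Set.indicator (Set.Ico y x) (fun θ => (θ - y) * Real.exp (a * θ)) := by
      funext θ
      simp only [Set.indicator, Set.mem_Ico]
      rcases lt_or_ge θ y with h1 | h1
      · have hx : θ < x := lt_trans h1 hxy
        rw [max_eq_left (by linarith), max_eq_left (by linarith), if_pos hx,
          if_neg (fun h => absurd h.1 (not_le.mpr h1))]
        ring
      · rcases lt_or_ge θ x with h2 | h2
        · rw [max_eq_right (by linarith), max_eq_left (by linarith),
            if_pos h2, if_pos ⟨h1, h2⟩]
          ring
        · rw [max_eq_right (by linarith), max_eq_right (by linarith),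
            if_neg (not_lt.mpr h2), if_neg (fun h => absurd h.2 (not_lt.mpr h2))]
          ring
    have key : ∫ θ in y..x, (θ - y) * Real.exp (a * θ)
        = - ∫ θ in y..x, (y - θ) * Real.exp (a * θ) := by
      rw [← intervalIntegral.integral_neg]
      congr 1
      funext θ
      ring
    rw [hfun, integral_indicator measurableSet_Ico, setIntegral_congr_set MeasureTheory.Ico_ae_eq_Ioc,
      ← intervalIntegral.integral_of_le hxy.le, key, ftc_aux a ha]
    field_simp
    ring
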